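/- Let n ≥ 4 be an integer, let s be a real number with 2 ≤ s ≤ n/2, and let μ be a natural number with μ ≤ s. Then ∫_{−√(4n²−s²)}^{√(4n²−s²)} [ n! / ∏_{k=0}^{n} |(−s + i·y) − k| ] · |((−s + i·y) − 2n)/n|^{μ} dy < 100 · (100·s/n)^{s−1}. -/

import Mathlib

open Real Finset


lemma natprod (j n : ℕ) :
    (∏ k ∈ Finset.range (n+1), (j+1+k)) * (j.factorial) = (n+(j+1)).factorial := by
  induction n with
  | zero => simp [Nat.factorial_succ]
  | succ m ih =>
    rw [Finset.prod_range_succ, mul_right_comm, ih]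
    have : m + 1 + (j + 1) = (m + (j+1)) + 1 := by omega
    rw [this, Nat.factorial_succ]
    ring

lemma fact_le_pow' : ∀ m : ℕ, 1 ≤ m → m.factorial ≤ m ^ (m - 1)
  | 1, _ => by norm_num
  | (m+2), _ => by
    have ih := fact_le_pow' (m+1) (by omega)
    calc (m+2).factorial = (m+2) * (m+1).factorial := rfl
    _ ≤ (m+2) * (m+1)^m := by exact Nat.mul_le_mul_left _ (by simpa using ih)
    _ ≤ (m+2) * (m+2)^m := by
        exact Nat.mul_le_mul_left _ (Nat.pow_le_pow_left (by omega) m)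
    _ = (m+2)^(m+1) := by rw [pow_succ]; ring

lemma key_prod (n : ℕ) (s : ℝ) (hs : 2 ≤ s) :
    (n.factorial : ℝ) * ((n:ℝ)+1) ^ s ≤ (∏ k ∈ Finset.range (n+1), (s + (k:ℝ))) * s ^ (s-1) := by
  have hs1 : (1:ℝ) ≤ s := by linarith
  set m := Nat.floor s with hmdef
  have hm2 : 2 ≤ m := Nat.le_floor (by exact_mod_cast hs)
  have hms : (m:ℝ) ≤ s := Nat.floor_le (by linarith)
  have hsm : s < (m:ℝ) + 1 := Nat.lt_floor_add_one s
  obtain ⟨j, hj⟩ : ∃ j, m = j + 2 := ⟨m - 2, by omega⟩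
  set θ : ℝ := (m:ℝ) + 1 - s with hθ
  have hθ0 : 0 ≤ θ := by simp [hθ]; linarith
  have hθ1 : θ ≤ 1 := by simp [hθ]; linarith
  have hθ1' : 0 ≤ 1 - θ := by linarith
  set F : ℝ := (n.factorial : ℝ) with hF
  set N : ℝ := (n:ℝ) + 1 with hN
  have hF0 : 0 < F := by rw [hF]; exact_mod_cast n.factorial_pos
  have hN0 : 0 < N := by positivity
  set A : ℝ := ∏ k ∈ Finset.range (n+1), ((m:ℝ) + k) with hA
  set B : ℝ := ∏ k ∈ Finset.range (n+1), ((m:ℝ) + 1 + k) with hB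
  -- step 2+3 : A^θ * B^(1-θ) ≤ P
  have step2 : A ^ θ * B ^ (1-θ) ≤ ∏ k ∈ Finset.range (n+1), (s + (k:ℝ)) := by
    rw [hA, hB, ← Real.finset_prod_rpow _ _ (fun i _ => by positivity) θ,
      ← Real.finset_prod_rpow _ _ (fun i _ => by positivity) (1-θ),
      ← Finset.prod_mul_distrib]
    apply Finset.prod_le_prod
    · intro k _; positivity
    · intro k _
      calc ((m:ℝ) + k) ^ θ * ((m:ℝ) + 1 + k) ^ (1-θ)
          ≤ θ * ((m:ℝ) + k) + (1-θ) * ((m:ℝ) + 1 + k) :=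
            Real.geom_mean_le_arith_mean2_weighted hθ0 hθ1' (by positivity) (by positivity)
              (by ring)
      _ = s + k := by rw [hθ]; ring
  -- step 4 : values of A and B
  have hAval : A * ((j+1).factorial : ℝ) = ((n + (j+2)).factorial : ℝ) := by
    have := natprod (j+1) n
    have h2 : (∏ k ∈ Finset.range (n+1), ((j:ℕ)+1+1+k)) * ((j+1).factorial) = (n+(j+2)).factorial := by
      convert this using 3 <;> omega
    calc A * ((j+1).factorial : ℝ)
        = ((∏ k ∈ Finset.range (n+1), ((j:ℕ)+1+1+k) : ℕ) : ℝ) * ((j+1).factorial : ℝ) := by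
          rw [hA]; push_cast; congr 1; apply Finset.prod_congr rfl; intro k _; rw [hj]; push_cast; ring
    _ = ((n + (j+2)).factorial : ℝ) := by rw [← Nat.cast_mul, h2]
  have hBval : B * ((j+2).factorial : ℝ) = ((n + (j+3)).factorial : ℝ) := by
    have := natprod (j+2) n
    have h2 : (∏ k ∈ Finset.range (n+1), ((j:ℕ)+2+1+k)) * ((j+2).factorial) = (n+(j+3)).factorial := by
      convert this using 3 <;> omega
    calc B * ((j+2).factorial : ℝ)
        = ((∏ k ∈ Finset.range (n+1), ((j:ℕ)+2+1+k) : ℕ) : ℝ) * ((j+2).factorial : ℝ) := by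
          rw [hB]; push_cast; congr 1; apply Finset.prod_congr rfl; intro k _; rw [hj]; push_cast; ring
    _ = ((n + (j+3)).factorial : ℝ) := by rw [← Nat.cast_mul, h2]
  -- step 5 : lower bounds on A, B
  have hc₁ : (0:ℝ) < ((j+1).factorial : ℝ) := by exact_mod_cast (j+1).factorial_pos
  have hc₂ : (0:ℝ) < ((j+2).factorial : ℝ) := by exact_mod_cast (j+2).factorial_pos
  have hAlb : F * N ^ (j+2 : ℕ) / ((j+1).factorial : ℝ) ≤ A := by
    rw [div_le_iff₀ hc₁, hAval]
    have := Nat.factorial_mul_pow_le_factorial (m := n) (n := j+2)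
    rw [hF, hN]; exact_mod_cast this
  have hBlb : F * N ^ (j+3 : ℕ) / ((j+2).factorial : ℝ) ≤ B := by
    rw [div_le_iff₀ hc₂, hBval]
    have := Nat.factorial_mul_pow_le_factorial (m := n) (n := j+3)
    rw [hF, hN]; exact_mod_cast this
  have hA0 : (0:ℝ) ≤ F * N ^ (j+2 : ℕ) / ((j+1).factorial : ℝ) := by positivity
  have hB0 : (0:ℝ) ≤ F * N ^ (j+3 : ℕ) / ((j+2).factorial : ℝ) := by positivity
  -- step 6 : combine
  have step6 : F * N ^ s / ((j+2).factorial : ℝ) ≤ A ^ θ * B ^ (1-θ) := by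
    have h1 : (F * N ^ (j+2 : ℕ) / ((j+1).factorial : ℝ)) ^ θ ≤ A ^ θ :=
      Real.rpow_le_rpow hA0 hAlb hθ0
    have h2 : (F * N ^ (j+3 : ℕ) / ((j+2).factorial : ℝ)) ^ (1-θ) ≤ B ^ (1-θ) :=
      Real.rpow_le_rpow hB0 hBlb hθ1'
    refine le_trans ?_ (mul_le_mul h1 h2 (by positivity) (by positivity))
    have expand : ∀ (p : ℕ) (c : ℝ), 0 < c → ∀ t : ℝ, 0 ≤ t →
        (F * N ^ p / c) ^ t = F ^ t * N ^ ((p:ℝ) * t) / c ^ t := by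
      intro p c hc t ht
      rw [Real.div_rpow (by positivity) hc.le, Real.mul_rpow hF0.le (by positivity),
        ← Real.rpow_natCast N p, ← Real.rpow_mul hN0.le]
    rw [expand _ _ hc₁ θ hθ0, expand _ _ hc₂ (1-θ) hθ1']
    rw [div_mul_div_comm]
    have hFcomb : F ^ θ * F ^ (1-θ) = F := by
      rw [← Real.rpow_add hF0]; norm_num
    have hNcomb : N ^ (((j:ℝ)+2) * θ) * N ^ (((j:ℝ)+3) * (1-θ)) = N ^ s := by
      rw [← Real.rpow_add hN0]
      congr 1
      have : (m:ℝ) = (j:ℝ) + 2 := by rw [hj]; push_cast; ring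
      rw [hθ, this]; ring
    have hccomb : ((j+1).factorial : ℝ) ^ θ * ((j+2).factorial : ℝ) ^ (1-θ) ≤ ((j+2).factorial : ℝ) := by
      calc ((j+1).factorial : ℝ) ^ θ * ((j+2).factorial : ℝ) ^ (1-θ)
          ≤ ((j+2).factorial : ℝ) ^ θ * ((j+2).factorial : ℝ) ^ (1-θ) := by
            apply mul_le_mul_of_nonneg_right _ (by positivity)
            exact Real.rpow_le_rpow hc₁.le (by exact_mod_cast Nat.factorial_le (by omega)) hθ0
      _ = ((j+2).factorial : ℝ) := by rw [← Real.rpow_add hc₂]; norm_num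
    push_cast
    rw [show ((j:ℝ)+2) * θ = ((j:ℝ)+2) * θ from rfl]
    calc F * N ^ s / ((j+2).factorial : ℝ)
        ≤ F ^ θ * F ^ (1-θ) * (N ^ (((j:ℝ)+2) * θ) * N ^ (((j:ℝ)+3) * (1-θ))) /
            (((j+1).factorial : ℝ) ^ θ * ((j+2).factorial : ℝ) ^ (1-θ)) := by
          rw [hFcomb, hNcomb]
          apply div_le_div_of_nonneg_left (by positivity) (by positivity) hccomb
    _ = F ^ θ * N ^ (((j:ℝ)+2) * θ) * (F ^ (1-θ) * N ^ (((j:ℝ)+3) * (1-θ))) /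
            (((j+1).factorial : ℝ) ^ θ * ((j+2).factorial : ℝ) ^ (1-θ)) := by ring
  -- step 7 : (j+2)! = m! ≤ s^(s-1)
  have step7 : ((j+2).factorial : ℝ) ≤ s ^ (s-1) := by
    have h1 : ((j+2).factorial : ℝ) ≤ ((m:ℝ)) ^ (m - 1 : ℕ) := by
      have := fact_le_pow' m (by omega)
      rw [hj] at this ⊢
      exact_mod_cast this
    have h2 : ((m:ℝ)) ^ (m - 1 : ℕ) = (m:ℝ) ^ ((m:ℝ) - 1) := by
      rw [← Real.rpow_natCast (m:ℝ) (m-1)]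
      congr 1
      have : ((m - 1 : ℕ) : ℝ) = (m:ℝ) - 1 := by
        have : 1 ≤ m := by omega
        push_cast [this]; ring
      rw [this]
    have h3 : (m:ℝ) ^ ((m:ℝ) - 1) ≤ s ^ ((m:ℝ) - 1) := by
      apply Real.rpow_le_rpow (by positivity) hms
      have : (2:ℝ) ≤ (m:ℝ) := by exact_mod_cast hm2
      linarith
    have h4 : s ^ ((m:ℝ) - 1) ≤ s ^ (s - 1) := by
      apply Real.rpow_le_rpow_of_exponent_le hs1
      linarith
    linarith [h1, h2 ▸ h1]
  -- conclude
  have hss : (0:ℝ) < s ^ (s-1) := Real.rpow_pos_of_pos (by linarith) _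
  have final : F * N ^ s / s ^ (s-1) ≤ ∏ k ∈ Finset.range (n+1), (s + (k:ℝ)) := by
    refine le_trans ?_ (le_trans step6 step2)
    apply div_le_div_of_nonneg_left (by positivity) (by positivity) step7
  rw [← div_le_iff₀ hss] at *
  calc F * N ^ s / s ^ (s-1) ≤ _ := final

lemma abs_fac (s y t : ℝ) :
    ‖(-(s : ℂ) + y * Complex.I) - t‖ = Real.sqrt ((s + t) ^ 2 + y ^ 2) := by
  rw [Complex.norm_def, Complex.normSq_apply]
  simp
  ring_nf

lemma twofac (a y : ℝ) (ha : 1 ≤ a) :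
    (a-1)*a*(1 + y^2/a^2) ≤ Real.sqrt ((a-1)^2 + y^2) * Real.sqrt (a^2 + y^2) := by
  have ha0 : (0:ℝ) < a := by linarith
  rw [← Real.sqrt_mul (by positivity)]
  rw [Real.le_sqrt (mul_nonneg (mul_nonneg (by linarith) ha0.le) (by positivity)) (by positivity)]
  have ha2 : (0:ℝ) < a^2 := by positivity
  have key : ((a-1)*a*(1 + y^2/a^2))^2 * a^2 = (a-1)^2*((a^2+y^2))^2 := by
    field_simp
  rw [← mul_le_mul_iff_left₀ ha2, key]
  nlinarith [sq_nonneg y, sq_nonneg (a^2+y^2), mul_nonneg (sq_nonneg y) (sq_nonneg y),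
    sq_nonneg ((a-1)*y), sq_nonneg (a*y), mul_nonneg (sq_nonneg y) ha2.le]

lemma prod_abs_lb (p : ℕ) (s y : ℝ) (hs : 2 ≤ s) :
    (∏ k ∈ Finset.range (p+4+1), (s+(k:ℝ))) * (1 + y^2/(s+((p:ℝ)+4))^2)
      ≤ ∏ k ∈ Finset.range (p+4+1), Real.sqrt ((s+(k:ℝ))^2 + y^2) := by
  have key : ∀ k : ℕ, (0:ℝ) < s + k := fun k => by positivity
  rw [Finset.prod_range_succ, Finset.prod_range_succ,
    Finset.prod_range_succ (f := fun k => Real.sqrt ((s+(k:ℝ))^2 + y^2)),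
    Finset.prod_range_succ (f := fun k => Real.sqrt ((s+(k:ℝ))^2 + y^2))]
  have h1 : ∏ k ∈ Finset.range (p+3), (s+(k:ℝ))
      ≤ ∏ k ∈ Finset.range (p+3), Real.sqrt ((s+(k:ℝ))^2 + y^2) := by
    apply Finset.prod_le_prod (fun k _ => (key k).le)
    intro k _
    rw [show (s+(k:ℝ))^2 + y^2 = (s+(k:ℝ))^2 + y^2 from rfl]
    calc s+(k:ℝ) = Real.sqrt ((s+(k:ℝ))^2) := (Real.sqrt_sq (key k).le).symm
    _ ≤ _ := Real.sqrt_le_sqrt (by nlinarith [sq_nonneg y])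
  have h2 : (s+((p:ℝ)+3)) * (s+((p:ℝ)+4)) * (1 + y^2/(s+((p:ℝ)+4))^2)
      ≤ Real.sqrt ((s+((p:ℝ)+3))^2 + y^2) * Real.sqrt ((s+((p:ℝ)+4))^2 + y^2) := by
    have ht := twofac (s+((p:ℝ)+4)) y (by nlinarith [p.cast_nonneg (α := ℝ)])
    have e1 : s+((p:ℝ)+4) - 1 = s+((p:ℝ)+3) := by ring
    rw [e1] at ht
    exact ht
  push_cast
  calc (∏ k ∈ Finset.range (p+3), (s+(k:ℝ))) * (s+((p:ℝ)+3)) * (s+((p:ℝ)+4)) * (1 + y^2/(s+((p:ℝ)+4))^2)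
      = (∏ k ∈ Finset.range (p+3), (s+(k:ℝ))) * ((s+((p:ℝ)+3)) * (s+((p:ℝ)+4)) * (1 + y^2/(s+((p:ℝ)+4))^2)) := by ring
  _ ≤ (∏ k ∈ Finset.range (p+3), Real.sqrt ((s+(k:ℝ))^2 + y^2)) *
        (Real.sqrt ((s+((p:ℝ)+3))^2 + y^2) * Real.sqrt ((s+((p:ℝ)+4))^2 + y^2)) := by
      apply mul_le_mul h1 h2 (by positivity) (Finset.prod_nonneg (fun k _ => Real.sqrt_nonneg _))
  _ = _ := by ring

lemma arith_final (n : ℕ) (hn : 4 ≤ n) (s : ℝ) (hs : 2 ≤ s) (hs' : s ≤ (n:ℝ)/2) :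
    s^(s-1)/((n:ℝ)+1)^s * Real.sqrt 10 ^ s * ((s+(n:ℝ)) * π) < 100 * (100*s/(n:ℝ))^(s-1) := by
  have hn0 : (0:ℝ) < n := by
    have : (4:ℝ) ≤ n := by exact_mod_cast hn
    linarith
  have hs0 : (0:ℝ) < s := by linarith
  have h10 : (1:ℝ) ≤ Real.sqrt 10 := by
    rw [show (1:ℝ) = Real.sqrt 1 by simp]
    exact Real.sqrt_le_sqrt (by norm_num)
  have h10' : (0:ℝ) < Real.sqrt 10 := by linarith
  have hsq10 : Real.sqrt 10 ^ 2 = 10 := Real.sq_sqrt (by norm_num)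
  set T : ℝ := (Real.sqrt 10 * s / (n:ℝ)) ^ s with hT
  have hT0 : 0 < T := Real.rpow_pos_of_pos (by positivity) _
  have hns : (0:ℝ) < ((n:ℝ))^s := Real.rpow_pos_of_pos hn0 _
  -- LHS ≤ (3/2)*π*(n/s)*T
  have hA : s^(s-1)/((n:ℝ)+1)^s * Real.sqrt 10 ^ s * ((s+(n:ℝ)) * π)
      ≤ (3/2) * π * ((n:ℝ)/s) * T := by
    have hb : ((n:ℝ))^s ≤ ((n:ℝ)+1)^s :=
      Real.rpow_le_rpow hn0.le (by linarith) (by linarith)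
    have hstep : s^(s-1)/((n:ℝ)+1)^s * Real.sqrt 10 ^ s * ((s+(n:ℝ)) * π)
        ≤ s^(s-1)/((n:ℝ))^s * Real.sqrt 10 ^ s * ((3/2*(n:ℝ)) * π) := by
      apply mul_le_mul
      · apply mul_le_mul_of_nonneg_right _ (by positivity)
        apply div_le_div_of_nonneg_left (by positivity) hns hb
      · have : s + (n:ℝ) ≤ 3/2*(n:ℝ) := by linarith
        exact mul_le_mul_of_nonneg_right this Real.pi_pos.le
      · positivity
      · positivity
    refine hstep.trans (le_of_eq ?_)
    rw [hT, Real.rpow_sub hs0, Real.rpow_one, Real.div_rpow (by positivity) hn0.le,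
      Real.mul_rpow h10'.le hs0.le]
    field_simp
  -- RHS = (n/s)*(10*√10)^s*T
  have hB : 100 * (100*s/(n:ℝ))^(s-1) = ((n:ℝ)/s) * ((10*Real.sqrt 10)^s * T) := by
    have h100 : (0:ℝ) < 100*s/(n:ℝ) := by positivity
    rw [Real.rpow_sub h100, Real.rpow_one, hT]
    have e : (100*s/(n:ℝ)) = (10*Real.sqrt 10) * (Real.sqrt 10 * s / (n:ℝ)) := by
      field_simp
      nlinarith [hsq10]
    rw [e, Real.mul_rpow (by positivity) (by positivity)]
    have m : Real.sqrt 10 * Real.sqrt 10 = 10 := Real.mul_self_sqrt (by norm_num)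
    field_simp
    linear_combination (-10) * hsq10
  -- final comparison
  have hpow : (1000:ℝ) ≤ (10*Real.sqrt 10)^s := by
    have h1 : (10*Real.sqrt 10 : ℝ)^(2:ℝ) ≤ (10*Real.sqrt 10)^s :=
      Real.rpow_le_rpow_of_exponent_le (by nlinarith) hs
    have h2 : (10*Real.sqrt 10 : ℝ)^(2:ℝ) = 1000 := by
      rw [show (2:ℝ) = ((2:ℕ):ℝ) by norm_num, Real.rpow_natCast, mul_pow, hsq10]
      norm_num
    exact h2 ▸ h1
  have hπ : π < 3.15 := Real.pi_lt_d2
  calc s^(s-1)/((n:ℝ)+1)^s * Real.sqrt 10 ^ s * ((s+(n:ℝ)) * π)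
      ≤ (3/2) * π * ((n:ℝ)/s) * T := hA
  _ < ((n:ℝ)/s) * ((10*Real.sqrt 10)^s * T) := by
      have hq : (3/2) * π < (10*Real.sqrt 10)^s := by nlinarith
      calc (3/2) * π * ((n:ℝ)/s) * T < (10*Real.sqrt 10)^s * ((n:ℝ)/s) * T := by
            apply mul_lt_mul_of_pos_right _ hT0
            exact mul_lt_mul_of_pos_right hq (by positivity)
      _ = ((n:ℝ)/s) * ((10*Real.sqrt 10)^s * T) := by ring
  _ = 100 * (100*s/(n:ℝ))^(s-1) := hB.symm
set_option maxHeartbeats 2000000 in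
theorem stmt6 (n : ℕ) (hn : 4 ≤ n) (s : ℝ) (hs : 2 ≤ s) (hs' : s ≤ (n : ℝ) / 2)
    (μ : ℕ) (hμ : (μ : ℝ) ≤ s) :
    ∫ y in (-(Real.sqrt (4 * (n : ℝ) ^ 2 - s ^ 2)))..(Real.sqrt (4 * (n : ℝ) ^ 2 - s ^ 2)),
      (Nat.factorial n : ℝ) /
          (∏ k ∈ Finset.range (n + 1),
            ‖(-(s : ℂ) + y * Complex.I) - k‖) *
        (‖((-(s : ℂ) + y * Complex.I) - 2 * n) / n‖) ^ μ <
      100 * (100 * s / n) ^ (s - 1) := by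
  have hn4 : (4:ℝ) ≤ (n:ℝ) := by exact_mod_cast hn
  have hn0 : (0:ℝ) < n := by linarith
  have hs0 : (0:ℝ) < s := by linarith
  set R : ℝ := Real.sqrt (4 * (n : ℝ) ^ 2 - s ^ 2) with hRdef
  have hΔ : (0:ℝ) ≤ 4 * (n:ℝ)^2 - s^2 := by nlinarith
  have hR0 : 0 ≤ R := Real.sqrt_nonneg _
  have hRsq : R^2 = 4 * (n:ℝ)^2 - s^2 := Real.sq_sqrt hΔ
  set c : ℝ := s + (n:ℝ) with hcdef
  have hc0 : 0 < c := by positivity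
  set P : ℝ := ∏ k ∈ Finset.range (n+1), (s + (k:ℝ)) with hPdef
  have hP0 : 0 < P := Finset.prod_pos (fun k _ => by positivity)
  have hF0 : (0:ℝ) < (n.factorial : ℝ) := by exact_mod_cast n.factorial_pos
  have h10 : (1:ℝ) ≤ Real.sqrt 10 := by
    rw [show (1:ℝ) = Real.sqrt 1 by simp]
    exact Real.sqrt_le_sqrt (by norm_num)
  set C : ℝ := (n.factorial : ℝ) / P * Real.sqrt 10 ^ s with hCdef
  have hC0 : 0 < C := by
    apply mul_pos (div_pos hF0 hP0) (Real.rpow_pos_of_pos (by linarith) _)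
  set f : ℝ → ℝ := fun y => (Nat.factorial n : ℝ) /
          (∏ k ∈ Finset.range (n + 1),
            ‖(-(s : ℂ) + y * Complex.I) - k‖) *
        (‖((-(s : ℂ) + y * Complex.I) - 2 * n) / n‖) ^ μ with hfdef
  set g : ℝ → ℝ := fun y => C * (1 + (y/c)^2)⁻¹ with hgdef
  -- continuity facts
  have hinner : ∀ t : ℂ, Continuous fun y : ℝ => (-(s : ℂ) + y * Complex.I) - t := by
    intro t
    continuity
  have habs : ∀ k : ℕ, ∀ y : ℝ, (0:ℝ) < ‖(-(s : ℂ) + y * Complex.I) - k‖ := by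
    intro k y
    apply norm_pos_iff.mpr
    intro h
    have := congrArg Complex.re h
    simp [Complex.sub_re, Complex.add_re] at this
    nlinarith [k.cast_nonneg (α := ℝ)]
  have hprodc : Continuous fun y : ℝ =>
      ∏ k ∈ Finset.range (n+1), ‖(-(s : ℂ) + y * Complex.I) - k‖ :=
    continuous_finset_prod _ (fun k _ => continuous_norm.comp (hinner k))
  have hprodpos : ∀ y : ℝ, 0 < ∏ k ∈ Finset.range (n+1),
      ‖(-(s : ℂ) + y * Complex.I) - k‖ :=
    fun y => Finset.prod_pos (fun k _ => habs k y)
  have hfc : Continuous f := by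
    apply Continuous.mul
    · exact continuous_const.div hprodc (fun y => (hprodpos y).ne')
    · exact (continuous_norm.comp (by continuity)).pow μ
  have hgc : Continuous g := by
    apply continuous_const.mul
    apply Continuous.inv₀
    · continuity
    · intro y
      positivity
  -- pointwise bound
  have hpt : ∀ y ∈ Set.Icc (-R) R, f y ≤ g y := by
    intro y hy
    have hy2 : y^2 ≤ 4 * (n:ℝ)^2 - s^2 := by
      rw [← hRsq]
      exact sq_le_sq' hy.1 hy.2
    -- denominator lower bound
    have hDeq : (∏ k ∈ Finset.range (n+1), ‖(-(s : ℂ) + y * Complex.I) - k‖)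
        = ∏ k ∈ Finset.range (n+1), Real.sqrt ((s+(k:ℝ))^2 + y^2) := by
      apply Finset.prod_congr rfl
      intro k _
      rw [show ((k:ℕ):ℂ) = (((k:ℕ):ℝ):ℂ) by push_cast; ring]
      exact abs_fac s y (k:ℝ)
    obtain ⟨p, hp⟩ : ∃ p, n = p + 4 := ⟨n - 4, by omega⟩
    have hDlb : P * (1 + y^2/c^2) ≤
        ∏ k ∈ Finset.range (n+1), Real.sqrt ((s+(k:ℝ))^2 + y^2) := by
      have := prod_abs_lb p s y hs
      rw [hPdef, hcdef, hp]
      have hcast : ((p + 4 : ℕ) : ℝ) = (p:ℝ) + 4 := by push_cast; ring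
      rw [hcast]
      exact this
    have hDlb' : P * (1 + y^2/c^2) ≤
        ∏ k ∈ Finset.range (n+1), ‖(-(s : ℂ) + y * Complex.I) - k‖ := by
      rw [hDeq]; exact hDlb
    have hu0 : 0 < 1 + y^2/c^2 := by positivity
    -- numerator factor bound
    have hq : ‖((-(s : ℂ) + y * Complex.I) - 2 * n) / n‖ ≤ Real.sqrt 10 := by
      rw [norm_div]
      have h1 : ‖(-(s : ℂ) + y * Complex.I) - 2 * n‖
          = Real.sqrt ((s + 2*(n:ℝ))^2 + y^2) := by
        rw [show (2 * (n:ℂ)) = ((2*(n:ℝ) : ℝ):ℂ) by push_cast; ring]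
        exact abs_fac s y (2*(n:ℝ))
      have h2 : ‖((n:ℕ):ℂ)‖ = (n:ℝ) := by
        rw [Complex.norm_natCast]
      rw [h1, h2, div_le_iff₀ hn0]
      have h4 : s*(n:ℝ) ≤ (n:ℝ)^2/2 := by nlinarith [hn0, hs']
      have h3 : (s + 2*(n:ℝ))^2 + y^2 ≤ 10 * (n:ℝ)^2 := by nlinarith [hy2, h4]
      calc Real.sqrt ((s + 2*(n:ℝ))^2 + y^2) ≤ Real.sqrt (10 * (n:ℝ)^2) :=
            Real.sqrt_le_sqrt h3
      _ = Real.sqrt 10 * (n:ℝ) := by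
          rw [Real.sqrt_mul (by norm_num), Real.sqrt_sq hn0.le]
    have hqμ : (‖((-(s : ℂ) + y * Complex.I) - 2 * n) / n‖) ^ μ
        ≤ Real.sqrt 10 ^ s := by
      calc (‖((-(s : ℂ) + y * Complex.I) - 2 * n) / n‖) ^ μ
          ≤ Real.sqrt 10 ^ μ := pow_le_pow_left₀ (norm_nonneg _) hq μ
      _ = Real.sqrt 10 ^ (μ:ℝ) := (Real.rpow_natCast _ μ).symm
      _ ≤ Real.sqrt 10 ^ s := Real.rpow_le_rpow_of_exponent_le h10 hμ
    -- combine
    have hfrac : (Nat.factorial n : ℝ) /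
          (∏ k ∈ Finset.range (n+1), ‖(-(s : ℂ) + y * Complex.I) - k‖)
        ≤ (Nat.factorial n : ℝ) / (P * (1 + y^2/c^2)) :=
      div_le_div_of_nonneg_left hF0.le (by positivity) hDlb'
    have : f y ≤ (Nat.factorial n : ℝ) / (P * (1 + y^2/c^2)) * Real.sqrt 10 ^ s := by
      rw [hfdef]
      exact mul_le_mul hfrac hqμ (by positivity) (by positivity)
    refine this.trans (le_of_eq ?_)
    show (Nat.factorial n : ℝ) / (P * (1 + y^2/c^2)) * Real.sqrt 10 ^ s
        = C * (1 + (y/c)^2)⁻¹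
    rw [hCdef, div_pow]
    field_simp
  -- integral comparison
  have hRR : -R ≤ R := by linarith
  have hint : (∫ y in (-R)..R, f y) ≤ ∫ y in (-R)..R, g y :=
    intervalIntegral.integral_mono_on hRR (hfc.intervalIntegrable _ _)
      (hgc.intervalIntegrable _ _) hpt
  -- compute ∫ g
  have hgval : (∫ y in (-R)..R, g y) = C * (c * (arctan (R/c) - arctan (-R/c))) := by
    show (∫ y in (-R)..R, C * (1 + (y/c)^2)⁻¹) = _
    rw [intervalIntegral.integral_const_mul]
    congr 1
    have := intervalIntegral.integral_comp_div (a := -R) (b := R)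
      (f := fun u : ℝ => (1 + u^2)⁻¹) (c := c) hc0.ne'
    rw [this, integral_inv_one_add_sq, smul_eq_mul, neg_div]
  have hglt : (∫ y in (-R)..R, g y) ≤ C * (c * π) := by
    rw [hgval]
    apply mul_le_mul_of_nonneg_left _ hC0.le
    apply mul_le_mul_of_nonneg_left _ hc0.le
    have h1 : arctan (R/c) < π/2 := Real.arctan_lt_pi_div_two _
    have h2 : -(π/2) < arctan (-R/c) := Real.neg_pi_div_two_lt_arctan _
    linarith
  -- final arithmetic
  have hkey := key_prod n s hs
  have hnp : (0:ℝ) < ((n:ℝ)+1)^s := Real.rpow_pos_of_pos (by linarith) _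
  have hfrac2 : (n.factorial : ℝ) / P ≤ s^(s-1) / ((n:ℝ)+1)^s := by
    rw [div_le_div_iff₀ hP0 hnp]
    calc (n.factorial : ℝ) * ((n:ℝ)+1)^s ≤ P * s^(s-1) := hkey
    _ = s^(s-1) * P := by ring
  have hfinal : C * (c * π) < 100 * (100 * s / n) ^ (s - 1) := by
    have h1 : C * (c * π) ≤ s^(s-1)/((n:ℝ)+1)^s * Real.sqrt 10 ^ s * ((s+(n:ℝ)) * π) := by
      rw [hCdef, hcdef]
      have : (n.factorial : ℝ) / P * Real.sqrt 10 ^ s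
          ≤ s^(s-1)/((n:ℝ)+1)^s * Real.sqrt 10 ^ s :=
        mul_le_mul_of_nonneg_right hfrac2 (by positivity)
      calc (n.factorial : ℝ) / P * Real.sqrt 10 ^ s * ((s+(n:ℝ)) * π)
          ≤ s^(s-1)/((n:ℝ)+1)^s * Real.sqrt 10 ^ s * ((s+(n:ℝ)) * π) := by
            apply mul_le_mul_of_nonneg_right this (by positivity)
      _ = _ := rfl
    exact lt_of_le_of_lt h1 (arith_final n hn s hs hs')
  show (∫ y in (-R)..R, f y) < 100 * (100 * s / n) ^ (s - 1)
  calc (∫ y in (-R)..R, f y) ≤ C * (c * π) := le_trans hint hglt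
  _ < _ := hfinal
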